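/- Let σ^M be the minimum G-strongly positive script and a a stable configuration. Then a is superstable if and only if for every script σ with 0 ≺ σ ⪯ σ^M (σ ∈ N^n nonzero, σ ⪯ σ^M componentwise), a − σΔ has a negative component; equivalently, a − σΔ is not stable for all such σ. -/

import Mathlib

/-- A finite directed multigraph without loops on `Fin (n+1)` with global sink `Fin.last n`. -/
structure SinkDigraph (n : ℕ) where
  e : Fin (n + 1) → Fin (n + 1) → ℕ
  loopless : ∀ i, e i i = 0
  sink_no_out : ∀ j, e (Fin.last n) j = 0
  path_to_sink : ∀ i, Relation.ReflTransGen (fun u v => 0 < e u v) i (Fin.last n)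

namespace SinkDigraph

variable {n : ℕ}

/-- Out-degree of a vertex. -/
def outDeg (G : SinkDigraph n) (i : Fin (n + 1)) : ℕ := ∑ j, G.e i j

/-- The (full) Laplacian matrix over ℤ. -/
def lap (G : SinkDigraph n) : Matrix (Fin (n + 1)) (Fin (n + 1)) ℤ :=
  Matrix.of fun i j => if i = j then (G.outDeg i : ℤ) else -(G.e i j : ℤ)

/-- The reduced Laplacian (rows/columns of the sink removed). -/
def redLap (G : SinkDigraph n) : Matrix (Fin n) (Fin n) ℤ :=
  Matrix.of fun i j => G.lap i.castSucc j.castSucc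

/-- The reduced Laplacian over ℚ. -/
def redLapQ (G : SinkDigraph n) : Matrix (Fin n) (Fin n) ℚ :=
  (G.redLap).map (Int.cast : ℤ → ℚ)

/-- A ℕ-script viewed as integer vector. -/
def natScript (σ : Fin n → ℕ) : Fin n → ℤ := fun i => (σ i : ℤ)

/-- Result of firing vertex `i` in configuration `a`. -/
def fire (G : SinkDigraph n) (a : Fin n → ℤ) (i : Fin n) : Fin n → ℤ :=
  fun j => a j - G.redLap i j

/-- Result of firing a sequence of vertices. -/
def applySeq (G : SinkDigraph n) : (Fin n → ℤ) → List (Fin n) → (Fin n → ℤ)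
  | a, [] => a
  | a, i :: s => G.applySeq (G.fire a i) s

/-- A firing sequence is legal from `a` if every fired vertex is active when fired. -/
def Legal (G : SinkDigraph n) : (Fin n → ℤ) → List (Fin n) → Prop
  | _, [] => True
  | a, i :: s => G.redLap i i ≤ a i ∧ G.Legal (G.fire a i) s

/-- The firing script of a firing sequence. -/
def script (s : List (Fin n)) : Fin n → ℤ := fun i => (s.count i : ℤ)

/-- A configuration is stable if it is non-negative and no vertex is active. -/
def IsStable (G : SinkDigraph n) (a : Fin n → ℤ) : Prop :=
  ∀ i, 0 ≤ a i ∧ a i < G.redLap i i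

/-- `b` is the stabilization of `a`. -/
def Stabilizes (G : SinkDigraph n) (a b : Fin n → ℤ) : Prop :=
  ∃ s : List (Fin n), G.Legal a s ∧ G.applySeq a s = b ∧ G.IsStable b

/-- The maximal stable configuration `c_max`. -/
def cmax (G : SinkDigraph n) : Fin n → ℤ := fun i => (G.outDeg i.castSucc : ℤ) - 1

/-- A stable configuration is critical if it is the stabilization of `c_max + c`
for some non-negative `c`. -/
def IsCritical (G : SinkDigraph n) (a : Fin n → ℤ) : Prop :=
  ∃ c : Fin n → ℤ, 0 ≤ c ∧ G.Stabilizes (G.cmax + c) a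

/-- `σΔ ≻ 0`, i.e. `σΔ` is non-negative and non-zero. -/
def GPositive (G : SinkDigraph n) (σ : Fin n → ℕ) : Prop :=
  0 ≤ Matrix.vecMul (natScript σ) G.redLap ∧ Matrix.vecMul (natScript σ) G.redLap ≠ 0

/-- Reachability along directed edges. -/
def Reach (G : SinkDigraph n) : Fin (n + 1) → Fin (n + 1) → Prop :=
  Relation.ReflTransGen (fun u v => 0 < G.e u v)

/-- A source component: a strongly connected component with no in-going edge from outside. -/
def IsSourceComponent (G : SinkDigraph n) (S : Set (Fin (n + 1))) : Prop :=
  (∃ i, S = {j | G.Reach i j ∧ G.Reach j i}) ∧ ∀ j ∉ S, ∀ k ∈ S, G.e j k = 0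

/-- A `G`-strongly positive script. -/
def GStronglyPositive (G : SinkDigraph n) (σ : Fin n → ℕ) : Prop :=
  G.GPositive σ ∧ ∀ S : Set (Fin (n + 1)), G.IsSourceComponent S →
    ∃ i : Fin n, i.castSucc ∈ S ∧ Matrix.vecMul (natScript σ) G.redLap i ≠ 0

/-- Linear equivalence of configurations. -/
def Equiv (G : SinkDigraph n) (a b : Fin n → ℤ) : Prop :=
  ∃ σ : Fin n → ℤ, b - a = Matrix.vecMul σ G.redLap

/-- The weight of a configuration. -/
def weight (a : Fin n → ℤ) : ℤ := ∑ i, a i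

/-- The energy (CFG) order: compare energy vectors `aΔ⁻¹` componentwise over ℚ. -/
def cfgLE (G : SinkDigraph n) (a b : Fin n → ℤ) : Prop :=
  Matrix.vecMul (fun i => (a i : ℚ)) (G.redLapQ)⁻¹ ≤
    Matrix.vecMul (fun i => (b i : ℚ)) (G.redLapQ)⁻¹

/-- A non-negative configuration is superstable if reverse-firing any nonzero ℕ-script
produces a negative component. -/
def IsSuperstable (G : SinkDigraph n) (a : Fin n → ℤ) : Prop :=
  0 ≤ a ∧ ∀ σ : Fin n → ℕ, σ ≠ 0 →
    ∃ i, a i - Matrix.vecMul (natScript σ) G.redLap i < 0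

end SinkDigraph

namespace SSAux

open SinkDigraph Matrix Finset

variable {n : ℕ}

lemma vm_apply (G : SinkDigraph n) (σ : Fin n → ℕ) (j : Fin n) :
    Matrix.vecMul (natScript σ) G.redLap j = ∑ i, (σ i : ℤ) * G.redLap i j := by
  simp [Matrix.vecMul, dotProduct, natScript]

lemma redLap_offdiag (G : SinkDigraph n) {i j : Fin n} (h : i ≠ j) :
    G.redLap i j = -(G.e i.castSucc j.castSucc : ℤ) := by
  simp only [redLap, lap, Matrix.of_apply]
  rw [if_neg (by simpa [Fin.castSucc_inj] using h)]

lemma redLap_offdiag_nonpos (G : SinkDigraph n) {i j : Fin n} (h : i ≠ j) :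
    G.redLap i j ≤ 0 := by
  rw [redLap_offdiag G h]; exact neg_nonpos.mpr (by positivity)

lemma vm_nonpos_of_zero (G : SinkDigraph n) (τ : Fin n → ℕ) {j : Fin n} (hj : τ j = 0) :
    Matrix.vecMul (natScript τ) G.redLap j ≤ 0 := by
  rw [vm_apply]
  apply Finset.sum_nonpos
  intro i _
  rcases eq_or_ne i j with rfl | hij
  · simp [hj]
  · exact mul_nonpos_of_nonneg_of_nonpos (by positivity) (redLap_offdiag_nonpos G hij)

lemma zero_row (G : SinkDigraph n) (μ : Fin n → ℕ)
    (hμ : 0 ≤ Matrix.vecMul (natScript μ) G.redLap) {j : Fin n} (hj : μ j = 0)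
    (i : Fin n) (hi : μ i ≠ 0) : G.e i.castSucc j.castSucc = 0 := by
  have h0 : Matrix.vecMul (natScript μ) G.redLap j = 0 :=
    le_antisymm (vm_nonpos_of_zero G μ hj) (by simpa using hμ j)
  rw [vm_apply] at h0
  have hterm : ∀ k ∈ Finset.univ, (μ k : ℤ) * G.redLap k j ≤ 0 := by
    intro k _
    rcases eq_or_ne k j with rfl | hkj
    · simp [hj]
    · exact mul_nonpos_of_nonneg_of_nonpos (by positivity) (redLap_offdiag_nonpos G hkj)
  have := (Finset.sum_eq_zero_iff_of_nonpos hterm).mp h0 i (Finset.mem_univ i)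
  have hij : i ≠ j := fun h => hi (h ▸ hj)
  rw [redLap_offdiag G hij] at this
  have : (μ i : ℤ) * (G.e i.castSucc j.castSucc : ℤ) = 0 := by linarith [this]
  rcases mul_eq_zero.mp this with h | h
  · exact absurd (by exact_mod_cast h) hi
  · exact_mod_cast h

/-- Any `G`-strongly positive script is strictly positive. -/
lemma stronglyPositive_pos (G : SinkDigraph n) (μ : Fin n → ℕ)
    (h : G.GStronglyPositive μ) (j₀ : Fin n) : 0 < μ j₀ := by
  classical
  by_contra hz
  have hj₀ : μ j₀ = 0 := by omega
  have hμ : 0 ≤ Matrix.vecMul (natScript μ) G.redLap := h.1.1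
  -- predecessors of zero-vertices are zero-vertices
  have hpred : ∀ v w : Fin (n+1), 0 < G.e v w →
      (∃ k : Fin n, w = k.castSucc ∧ μ k = 0) → (∃ k : Fin n, v = k.castSucc ∧ μ k = 0) := by
    rintro v w hvw ⟨k, rfl, hk⟩
    have hvlast : v ≠ Fin.last n := by
      rintro rfl; rw [G.sink_no_out] at hvw; exact absurd hvw (lt_irrefl 0)
    refine ⟨v.castPred hvlast, (Fin.castSucc_castPred v hvlast).symm, ?_⟩
    by_contra hl
    have := zero_row G μ hμ hk (v.castPred hvlast) hl
    rw [Fin.castSucc_castPred] at this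
    omega
  -- everything reaching j₀ is a zero-vertex
  have hR : ∀ v, G.Reach v j₀.castSucc → ∃ k : Fin n, v = k.castSucc ∧ μ k = 0 := by
    intro v hv
    induction hv using Relation.ReflTransGen.head_induction_on with
    | refl => exact ⟨j₀, rfl, hj₀⟩
    | head h' _ ih => exact hpred _ _ h' ih
  -- pick v reaching j₀ with minimal predecessor set
  let P : Fin (n+1) → Finset (Fin (n+1)) := fun v => Finset.univ.filter (fun w => G.Reach w v)
  obtain ⟨v, hvmem, hvmin⟩ := Finset.exists_min_image
    (Finset.univ.filter fun v => G.Reach v j₀.castSucc) (fun v => (P v).card)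
    ⟨j₀.castSucc, Finset.mem_filter.mpr ⟨Finset.mem_univ _, Relation.ReflTransGen.refl⟩⟩
  have hvu : G.Reach v j₀.castSucc := (Finset.mem_filter.mp hvmem).2
  -- S is a source component
  have hsrc : G.IsSourceComponent {j | G.Reach v j ∧ G.Reach j v} := by
    refine ⟨⟨v, rfl⟩, ?_⟩
    intro j hj k hk
    by_contra he
    have hjk : 0 < G.e j k := Nat.pos_of_ne_zero he
    have hjk' : G.Reach j k := Relation.ReflTransGen.single hjk
    have hjv : G.Reach j v := hjk'.trans hk.2
    have hsub : P j ⊆ P v := by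
      intro w hw
      simp only [P, Finset.mem_filter, Finset.mem_univ, true_and] at hw ⊢
      exact hw.trans hjv
    have hcard : (P v).card ≤ (P j).card :=
      hvmin j (Finset.mem_filter.mpr ⟨Finset.mem_univ j, hjv.trans hvu⟩)
    have heq : P j = P v := Finset.eq_of_subset_of_card_le hsub hcard
    have hvP : v ∈ P v := Finset.mem_filter.mpr ⟨Finset.mem_univ v, Relation.ReflTransGen.refl⟩
    rw [← heq] at hvP
    have hvj : G.Reach v j := by
      simpa [P] using hvP
    exact hj ⟨hvj, hjv⟩
  obtain ⟨i, hiS, hine⟩ := h.2 _ hsrc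
  obtain ⟨k, hk, hk0⟩ := hR i.castSucc (hiS.2.trans hvu)
  have : μ i = 0 := by
    have : i = k := Fin.castSucc_injective n hk
    rw [this]; exact hk0
  exact hine (le_antisymm (vm_nonpos_of_zero G μ this) (by simpa using hμ i))

/-- The truncated-subtraction step: if `a - σΔ ⪰ 0` then `a - (σ ∸ μ)Δ ⪰ 0`. -/
lemma tsub_step (G : SinkDigraph n) (a : Fin n → ℤ) (ha0 : ∀ i, 0 ≤ a i) (σ μ : Fin n → ℕ)
    (hμ : 0 ≤ Matrix.vecMul (natScript μ) G.redLap)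
    (hσ : ∀ j, 0 ≤ a j - Matrix.vecMul (natScript σ) G.redLap j) (j : Fin n) :
    0 ≤ a j - Matrix.vecMul (natScript (σ - μ)) G.redLap j := by
  rcases le_or_gt (μ j) (σ j) with hc | hc
  · have key : Matrix.vecMul (natScript (σ - μ)) G.redLap j
        ≤ Matrix.vecMul (natScript σ) G.redLap j - Matrix.vecMul (natScript μ) G.redLap j := by
      rw [vm_apply, vm_apply, vm_apply, ← Finset.sum_sub_distrib]
      apply Finset.sum_le_sum
      intro i _
      rw [Pi.sub_apply]
      rcases eq_or_ne i j with rfl | hij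
      · have hco : ((σ i - μ i : ℕ) : ℤ) = (σ i : ℤ) - (μ i : ℤ) := by omega
        rw [hco, sub_mul]
      · have hco : (σ i : ℤ) - (μ i : ℤ) ≤ ((σ i - μ i : ℕ) : ℤ) := by omega
        calc ((σ i - μ i : ℕ) : ℤ) * G.redLap i j
            ≤ ((σ i : ℤ) - (μ i : ℤ)) * G.redLap i j :=
              mul_le_mul_of_nonpos_right hco (redLap_offdiag_nonpos G hij)
          _ = (σ i : ℤ) * G.redLap i j - (μ i : ℤ) * G.redLap i j := sub_mul _ _ _
    have h1 := hσ j
    have h2 : (0 : ℤ) ≤ Matrix.vecMul (natScript μ) G.redLap j := by simpa using hμ j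
    linarith
  · have h0 : (σ - μ) j = 0 := by simp only [Pi.sub_apply]; omega
    have := vm_nonpos_of_zero G (σ - μ) h0
    linarith [ha0 j]

lemma single_vm (G : SinkDigraph n) (j k : Fin n) :
    Matrix.vecMul (natScript (Pi.single j 1 : Fin n → ℕ)) G.redLap k = G.redLap j k := by
  classical
  rw [vm_apply]
  rw [Finset.sum_eq_single j]
  · simp
  · intro i _ hij; simp [Pi.single_apply, hij]
  · simp

end SSAux

namespace SSAux

open SinkDigraph Matrix Finset

variable {n : ℕ}

lemma main1 (G : SinkDigraph n) (σM : Fin n → ℕ) (hpos : ∀ i, 0 < σM i)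
    (hμ : 0 ≤ Matrix.vecMul (natScript σM) G.redLap)
    (a : Fin n → ℤ) (ha0 : ∀ i, 0 ≤ a i)
    (H : ∀ σ : Fin n → ℕ, σ ≠ 0 → σ ≤ σM →
      ∃ i, a i - Matrix.vecMul (natScript σ) G.redLap i < 0) :
    ∀ N (σ : Fin n → ℕ), (∑ i, σ i) ≤ N → σ ≠ 0 →
      ∃ i, a i - Matrix.vecMul (natScript σ) G.redLap i < 0 := by
  intro N
  induction N with
  | zero =>
    intro σ hs hne
    exfalso; apply hne; funext i
    have : σ i = 0 := by
      have h2 : σ i ≤ ∑ k, σ k := Finset.single_le_sum (f := σ) (fun k _ => Nat.zero_le (σ k))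
        (Finset.mem_univ i)
      omega
    simp [this]
  | succ N ih =>
    intro σ hs hne
    by_contra hcon
    push_neg at hcon
    by_cases hle : σ ≤ σM
    · obtain ⟨i, hi⟩ := H σ hne hle
      exact absurd hi (not_lt.2 (hcon i))
    · obtain ⟨i0, hi0⟩ := not_forall.mp (fun h => hle h)
      push_neg at hi0
      have hτne : σ - σM ≠ 0 := by
        intro h
        have := congrFun h i0
        simp only [Pi.sub_apply, Pi.zero_apply] at this
        have h1 : σM i0 < σ i0 := hi0
        have h2 : σ i0 - σM i0 = 0 := this
        omega
      have hsum : ∑ i, (σ - σM) i ≤ N := by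
        have hlt : ∑ i, (σ - σM) i < ∑ i, σ i := by
          apply Finset.sum_lt_sum (fun i _ => by simp only [Pi.sub_apply]; omega)
          refine ⟨i0, Finset.mem_univ i0, ?_⟩
          have := hpos i0
          have h1 : σM i0 < σ i0 := hi0
          simp only [Pi.sub_apply]; omega
        omega
      obtain ⟨i, hi⟩ := ih (σ - σM) hsum hτne
      exact absurd (tsub_step G a ha0 σ σM hμ hcon i) (not_le.2 hi)

lemma step2 (G : SinkDigraph n) (σM : Fin n → ℕ) (hpos : ∀ i, 0 < σM i)
    (hμ : 0 ≤ Matrix.vecMul (natScript σM) G.redLap)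
    (a : Fin n → ℤ) (ha : G.IsStable a)
    (H : ∀ σ : Fin n → ℕ, σ ≠ 0 → σ ≤ σM →
      ¬ G.IsStable (a - Matrix.vecMul (natScript σ) G.redLap))
    (σ : Fin n → ℕ) (hne : σ ≠ 0) (hle : σ ≤ σM)
    (hcon : ∀ k, 0 ≤ a k - Matrix.vecMul (natScript σ) G.redLap k) :
    ∃ σ' : Fin n → ℕ, σ' ≠ 0 ∧ σ' ≤ σM ∧
      (∀ k, 0 ≤ a k - Matrix.vecMul (natScript σ') G.redLap k) ∧
      ∑ i, (σM i - σ' i) < ∑ i, (σM i - σ i) := by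
  classical
  have ha0 : ∀ i, 0 ≤ a i := fun i => (ha i).1
  obtain ⟨j, hj⟩ : ∃ j, G.redLap j j ≤ a j - Matrix.vecMul (natScript σ) G.redLap j := by
    by_contra h'
    push_neg at h'
    exact H σ hne hle fun i => ⟨by simpa using hcon i, by simpa using h' i⟩
  set σ' : Fin n → ℕ := σ + Pi.single j 1 with hσ'def
  clear_value σ'
  have hvm' : ∀ k, Matrix.vecMul (natScript σ') G.redLap k
      = Matrix.vecMul (natScript σ) G.redLap k + G.redLap j k := by
    intro k
    have hns : natScript σ' = natScript σ + natScript (Pi.single j 1 : Fin n → ℕ) := by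
      funext i; simp [natScript, hσ'def]
    rw [hns, Matrix.add_vecMul, Pi.add_apply, single_vm]
  have hge' : ∀ k, 0 ≤ a k - Matrix.vecMul (natScript σ') G.redLap k := by
    intro k
    rw [hvm']
    rcases eq_or_ne k j with rfl | hkj
    · linarith [hj]
    · have := redLap_offdiag_nonpos G (Ne.symm hkj)
      linarith [hcon k]
  have hσ'j : σ' j = σ j + 1 := by simp [hσ'def, Pi.single_eq_same]
  have hσ'i : ∀ i, i ≠ j → σ' i = σ i := by
    intro i hij; simp [hσ'def, Pi.single_eq_of_ne hij]
  rcases Nat.lt_or_ge (σ j) (σM j) with hcase | hge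

  · refine ⟨σ', ?_, ?_, hge', ?_⟩
    · intro h
      have := congrFun h j
      rw [hσ'j] at this
      simp at this
    · intro i
      by_cases hij : i = j
      · subst hij; rw [hσ'j]; exact hcase
      · rw [hσ'i i hij]; exact hle i
    · apply Finset.sum_lt_sum
      · intro i _
        by_cases hij : i = j
        · subst hij; rw [hσ'j]; omega
        · rw [hσ'i i hij]
      · refine ⟨j, Finset.mem_univ j, ?_⟩
        rw [hσ'j]; omega
  · exfalso
    have hcase : σ j = σM j := le_antisymm (hle j) hge
    have h1 : σ' - σM = Pi.single j 1 := by
      funext i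
      by_cases hij : i = j
      · subst hij
        rw [Pi.sub_apply, hσ'j, Pi.single_eq_same]
        omega
      · rw [Pi.sub_apply, hσ'i i hij, Pi.single_eq_of_ne hij]
        have h2 : σ i ≤ σM i := hle i
        omega
    have hstep := tsub_step G a ha0 σ' σM hμ hge' j
    rw [h1, single_vm] at hstep
    have := (ha j).2
    linarith

lemma main2 (G : SinkDigraph n) (σM : Fin n → ℕ) (hpos : ∀ i, 0 < σM i)
    (hμ : 0 ≤ Matrix.vecMul (natScript σM) G.redLap)
    (a : Fin n → ℤ) (ha : G.IsStable a)
    (H : ∀ σ : Fin n → ℕ, σ ≠ 0 → σ ≤ σM →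
      ¬ G.IsStable (a - Matrix.vecMul (natScript σ) G.redLap)) :
    ∀ N (σ : Fin n → ℕ), σ ≠ 0 → σ ≤ σM → (∑ i, (σM i - σ i)) ≤ N →
      ∃ i, a i - Matrix.vecMul (natScript σ) G.redLap i < 0 := by
  intro N
  induction N with
  | zero =>
    intro σ hne hle hsum
    by_contra hcon
    push_neg at hcon
    obtain ⟨σ', _, _, _, hlt⟩ := step2 G σM hpos hμ a ha H σ hne hle hcon
    omega
  | succ N ih =>
    intro σ hne hle hsum
    by_contra hcon
    push_neg at hcon
    obtain ⟨σ', h1, h2, h3, hlt⟩ := step2 G σM hpos hμ a ha H σ hne hle hcon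
    obtain ⟨i, hi⟩ := ih σ' h1 h2 (by omega)
    exact absurd (h3 i) (not_le.2 hi)

end SSAux

open SinkDigraph Matrix

theorem superstable_test_below_min_script (n : ℕ) (G : SinkDigraph n)
    (σM : Fin n → ℕ) (hσM : G.GStronglyPositive σM)
    (hmin : ∀ σ : Fin n → ℕ, G.GStronglyPositive σ → σM ≤ σ)
    (a : Fin n → ℤ) (ha : G.IsStable a) :
    (G.IsSuperstable a ↔ ∀ σ : Fin n → ℕ, σ ≠ 0 → σ ≤ σM →
        ∃ i, a i - Matrix.vecMul (natScript σ) G.redLap i < 0) ∧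
    (G.IsSuperstable a ↔ ∀ σ : Fin n → ℕ, σ ≠ 0 → σ ≤ σM →
        ¬ G.IsStable (a - Matrix.vecMul (natScript σ) G.redLap)) := by
  have hpos : ∀ i, 0 < σM i := SSAux.stronglyPositive_pos G σM hσM
  have hμ : 0 ≤ Matrix.vecMul (natScript σM) G.redLap := hσM.1.1
  have ha0 : ∀ i, 0 ≤ a i := fun i => (ha i).1
  constructor
  · constructor
    · intro hss σ hne _
      exact hss.2 σ hne
    · intro H
      exact ⟨fun i => ha0 i,
        fun σ hne => SSAux.main1 G σM hpos hμ a ha0 H (∑ i, σ i) σ le_rfl hne⟩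
  · constructor
    · intro hss σ hne _
      obtain ⟨i, hi⟩ := hss.2 σ hne
      intro hstab
      have h2 := (hstab i).1
      rw [Pi.sub_apply] at h2
      linarith
    · intro H
      have H1 : ∀ σ : Fin n → ℕ, σ ≠ 0 → σ ≤ σM →
          ∃ i, a i - Matrix.vecMul (natScript σ) G.redLap i < 0 :=
        fun σ h1 h2 => SSAux.main2 G σM hpos hμ a ha H (∑ i, (σM i - σ i)) σ h1 h2 le_rfl
      exact ⟨fun i => ha0 i,
        fun σ hne => SSAux.main1 G σM hpos hμ a ha0 H1 (∑ i, σ i) σ le_rfl hne⟩
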